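/- Let K be a natural number and let V₀, V₁, …, V_K : [0,∞) → ℝ be nonnegative nondecreasing functions with V₀(x₀) > 0 for some x₀ > 0. Let f : [0,∞) → ℝ be twice continuously differentiable with f(0) > 0, f'(0) = 0, and f''(x) = −(∑_{k=0}^K V_k(x) f(x)^{2k}) · f(x) for all x ≥ 0. Then |f(x)| ≤ f(0) for all x ≥ 0. -/

import Mathlib

open Set Filter Finset


/-- Auxiliary: if `G z - G y ≤ C (φ z - φ y)(z - y)` for all `0 ≤ y ≤ z ≤ t`, then
`G t ≤ G 0` (uniform partition / Riemann-sum argument). -/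
theorem stmt8_aux_partition (G φ : ℝ → ℝ) (C t : ℝ) (ht0 : 0 ≤ t) (hC : 0 ≤ C)
    (hφ : φ 0 ≤ φ t)
    (h2 : ∀ y z : ℝ, 0 ≤ y → y ≤ z → z ≤ t → G z - G y ≤ C * (φ z - φ y) * (z - y)) :
    G t ≤ G 0 := by
  have key : ∀ m : ℕ, 1 ≤ m → G t - G 0 ≤ C * (φ t - φ 0) * t / m := by
    intro m hm
    have hm0 : (0:ℝ) < m := by exact_mod_cast hm
    set y : ℕ → ℝ := fun j => t * j / m with hy
    have hy0 : y 0 = 0 := by simp [hy]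
    have hym : y m = t := by rw [hy]; field_simp
    have hymem : ∀ j : ℕ, j ≤ m → 0 ≤ y j ∧ y j ≤ t := by
      intro j hj
      have hjm : (j:ℝ) ≤ m := by exact_mod_cast hj
      constructor
      · exact div_nonneg (mul_nonneg ht0 (Nat.cast_nonneg j)) hm0.le
      · rw [hy, div_le_iff₀ hm0]; nlinarith
    have hstep : ∀ j ∈ Finset.range m,
        G (y (j + 1)) - G (y j) ≤ C * (φ (y (j + 1)) - φ (y j)) * (t / m) := by
      intro j hj
      have hjm : j < m := Finset.mem_range.mp hj
      have h1 := hymem j hjm.le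
      have h2' := hymem (j + 1) hjm
      have hmono : y j ≤ y (j + 1) := by
        rw [hy, div_le_div_iff₀ hm0 hm0]
        push_cast
        nlinarith
      have hdiff : y (j + 1) - y j = t / m := by
        rw [hy]
        push_cast
        field_simp
        ring
      calc G (y (j + 1)) - G (y j)
          ≤ C * (φ (y (j + 1)) - φ (y j)) * (y (j + 1) - y j) :=
            h2 _ _ h1.1 hmono h2'.2
        _ = C * (φ (y (j + 1)) - φ (y j)) * (t / m) := by rw [hdiff]
    calc G t - G 0 = ∑ j ∈ Finset.range m, (G (y (j + 1)) - G (y j)) := by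
          rw [Finset.sum_range_sub (fun j => G (y j)) m, hy0, hym]
      _ ≤ ∑ j ∈ Finset.range m, C * (φ (y (j + 1)) - φ (y j)) * (t / m) :=
          Finset.sum_le_sum hstep
      _ = (∑ j ∈ Finset.range m, (φ (y (j + 1)) - φ (y j))) * (C * (t / m)) := by
          rw [Finset.sum_mul]
          exact Finset.sum_congr rfl fun j _ => by ring
      _ = (φ (y m) - φ (y 0)) * (C * (t / m)) := by
          rw [Finset.sum_range_sub (fun j => φ (y j)) m]
      _ = C * (φ t - φ 0) * t / m := by rw [hym, hy0]; field_simp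
  by_contra hlt
  push_neg at hlt
  have hε : 0 < G t - G 0 := by linarith
  have hDd0 : 0 ≤ C * (φ t - φ 0) * t := mul_nonneg (mul_nonneg hC (by linarith)) ht0
  obtain ⟨m, hm⟩ := exists_nat_gt (C * (φ t - φ 0) * t / (G t - G 0))
  have hm1 : 1 ≤ m := by
    rcases Nat.eq_zero_or_pos m with h | h
    · exfalso
      subst h
      simp only [Nat.cast_zero] at hm
      have := div_nonneg hDd0 hε.le
      linarith
    · exact h
  have hm0 : (0:ℝ) < m := by exact_mod_cast hm1
  have h1 := key m hm1
  have h2' : C * (φ t - φ 0) * t / m < G t - G 0 := by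
    rw [div_lt_iff₀ hm0]
    rw [div_lt_iff₀ hε] at hm
    nlinarith
  linarith

set_option maxHeartbeats 2000000 in
/-- For the ODE `f'' = −V(x, f²) f`, `V(x,y) = ∑_{k=0}^K V_k(x) y^k` with
nonnegative nondecreasing coefficients `V_k`, `V₀(x₀) > 0` for some `x₀ > 0`, and
initial data `f(0) > 0`, `f'(0) = 0`, the solution satisfies `|f(x)| ≤ f(0)` for all
`x ≥ 0`. -/
theorem stmt_8 (K : ℕ) (V : ℕ → ℝ → ℝ)
    (hVnonneg : ∀ k ≤ K, ∀ x : ℝ, 0 ≤ x → 0 ≤ V k x)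
    (hVmono : ∀ k ≤ K, MonotoneOn (V k) (Set.Ici (0 : ℝ)))
    (x₀ : ℝ) (hx₀ : 0 < x₀) (hV₀ : 0 < V 0 x₀)
    (f : ℝ → ℝ) (hf : ContDiff ℝ 2 f) (hf0 : 0 < f 0) (hf'0 : deriv f 0 = 0)
    (hODE : ∀ x : ℝ, 0 ≤ x →
      deriv (deriv f) x = -(∑ k ∈ Finset.range (K + 1), V k x * f x ^ (2 * k)) * f x) :
    ∀ x : ℝ, 0 ≤ x → |f x| ≤ f 0 := by
  -- basic differentiability facts
  have hfd : Differentiable ℝ f := hf.differentiable (by norm_num)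
  have hfc : Continuous f := hfd.continuous
  have hf'd : Differentiable ℝ (deriv f) :=
    ((contDiff_succ_iff_deriv.mp (by exact_mod_cast hf : ContDiff ℝ ((1:ℕ)+1) f)).2.2).differentiable
      (by norm_num)
  have hf'c : Continuous (deriv f) := hf'd.continuous
  have Hf : ∀ u : ℝ, HasDerivAt f (deriv f u) u := fun u => (hfd u).hasDerivAt
  have Hf' : ∀ u : ℝ, HasDerivAt (deriv f) (deriv (deriv f) u) u := fun u => (hf'd u).hasDerivAt
  -- reduce to the squared statement
  suffices hsq : ∀ x : ℝ, 0 ≤ x → f x ^ 2 ≤ f 0 ^ 2 by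
    intro x hx
    nlinarith [hsq x hx, abs_nonneg (f x), sq_abs (f x)]
  by_contra hcon
  push_neg at hcon
  obtain ⟨x₁, hx₁0, hx₁⟩ := hcon
  set A : ℝ := f 0 with hAdef
  have hA : 0 < A := hf0
  set D : Set ℝ := {x : ℝ | 0 ≤ x ∧ A ^ 2 < f x ^ 2} with hDdef
  have hDne : D.Nonempty := ⟨x₁, hx₁0, hx₁⟩
  have hDbdd : BddBelow D := ⟨0, fun s hs => hs.1⟩
  set t : ℝ := sInf D with htdef
  have ht0 : 0 ≤ t := le_csInf hDne fun b hb => hb.1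
  -- on [0,t) the function is small
  have hle : ∀ u : ℝ, 0 ≤ u → u < t → f u ^ 2 ≤ A ^ 2 := by
    intro u hu hut
    by_contra h
    push_neg at h
    exact absurd (csInf_le hDbdd ⟨hu, h⟩) (not_le.mpr hut)
  -- f t ^ 2 = A ^ 2
  have hft_ge : A ^ 2 ≤ f t ^ 2 := by
    by_contra h
    push_neg at h
    have hcont : ContinuousAt (fun u => f u ^ 2) t := (hfc.pow 2).continuousAt
    obtain ⟨δ, hδ, hball⟩ := Metric.continuousAt_iff.mp hcont (A ^ 2 - f t ^ 2) (by linarith)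
    obtain ⟨s, hsD, hs⟩ := Real.lt_sInf_add_pos hDne hδ
    have hts : t ≤ s := csInf_le hDbdd hsD
    have : dist s t < δ := by rw [Real.dist_eq, abs_of_nonneg (by linarith)]; linarith
    have := hball this
    rw [Real.dist_eq] at this
    have h2 : f s ^ 2 - f t ^ 2 < A ^ 2 - f t ^ 2 := lt_of_le_of_lt (le_abs_self _) this
    have := hsD.2
    simp only [hDdef, mem_setOf_eq] at hsD
    linarith [hsD.2]
  have hft2 : f t ^ 2 = A ^ 2 := by
    rcases eq_or_lt_of_le ht0 with h0 | h0
    · rw [← h0]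
    · refine le_antisymm ?_ hft_ge
      have h1 : Tendsto (fun u => f u ^ 2) (nhdsWithin t (Iio t)) (nhds (f t ^ 2)) :=
        ((hfc.pow 2).tendsto t).mono_left nhdsWithin_le_nhds
      refine le_of_tendsto h1 ?_
      filter_upwards [Ioo_mem_nhdsLT_of_mem (show t ∈ Ioc (0:ℝ) t from ⟨h0, le_rfl⟩)] with u hu
      exact hle u hu.1.le hu.2
  have hfsq_le : ∀ u ∈ Icc (0:ℝ) t, f u ^ 2 ≤ A ^ 2 := by
    intro u hu
    rcases lt_or_eq_of_le hu.2 with h | h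
    · exact hle u hu.1 h
    · rw [h, hft2]
  -- bound on |f' f| on [0,t]
  obtain ⟨B0, hB0⟩ := (isCompact_Icc : IsCompact (Icc (0:ℝ) t)).exists_bound_of_continuousOn
    ((hf'c.mul hfc).continuousOn)
  set B : ℝ := max B0 0 with hBdef
  have hB : ∀ u ∈ Icc (0:ℝ) t, |deriv f u * f u| ≤ B := fun u hu =>
    (hB0 u hu).trans (le_max_left _ _)
  have hBnn : 0 ≤ B := le_max_right _ _
  set Cb : ℝ := 2 * B * (1 + A ^ 2) ^ K with hCbdef
  have hCb0 : 0 ≤ Cb := by positivity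
  have hpowb : ∀ u ∈ Icc (0:ℝ) t, ∀ k ≤ K, (f u ^ 2) ^ k ≤ (1 + A ^ 2) ^ K := by
    intro u hu k hk
    calc (f u ^ 2) ^ k ≤ (1 + A ^ 2) ^ k := by
          apply pow_le_pow_left₀ (sq_nonneg _)
          have := hfsq_le u hu; linarith
      _ ≤ (1 + A ^ 2) ^ K := pow_le_pow_right₀ (by nlinarith [sq_nonneg A]) hk
  -- the energy function
  set G : ℝ → ℝ := fun u => (deriv f u) ^ 2 +
    ∑ k ∈ Finset.range (K + 1), V k u * ((f u ^ 2) ^ (k + 1) - (A ^ 2) ^ (k + 1)) / ((k : ℝ) + 1)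
    with hGdef
  -- two point estimate
  have twopoint : ∀ y z : ℝ, 0 ≤ y → y ≤ z → z ≤ t →
      G z - G y ≤ Cb * (∑ k ∈ Finset.range (K + 1), (V k z - V k y)) * (z - y) := by
    intro y z hy0 hyz hzt
    have hsub : Icc y z ⊆ Icc (0:ℝ) t := fun u hu => ⟨hy0.trans hu.1, hu.2.trans hzt⟩
    set F : ℝ → ℝ := fun u => (deriv f u) ^ 2 +
      ∑ k ∈ Finset.range (K + 1),
        V k y * ((f u ^ 2) ^ (k + 1) - (A ^ 2) ^ (k + 1)) / ((k : ℝ) + 1) with hFdef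
    set F' : ℝ → ℝ := fun u =>
      ∑ k ∈ Finset.range (K + 1), (V k y - V k u) * (2 * f u * deriv f u * (f u ^ 2) ^ k)
      with hF'def
    have hVmono' : ∀ k ∈ Finset.range (K + 1), ∀ a b : ℝ, 0 ≤ a → a ≤ b → V k a ≤ V k b := by
      intro k hk a b ha hab
      exact hVmono k (Nat.lt_succ_iff.mp (Finset.mem_range.mp hk)) ha
        (le_trans ha hab) hab
    have hVnn' : ∀ k ∈ Finset.range (K + 1), ∀ a : ℝ, 0 ≤ a → 0 ≤ V k a := fun k hk a ha =>
      hVnonneg k (Nat.lt_succ_iff.mp (Finset.mem_range.mp hk)) a ha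
    -- derivative of F
    have hFderiv : ∀ u ∈ Icc y z, HasDerivAt F (F' u) u := by
      intro u hu
      have h0u : 0 ≤ u := hy0.trans hu.1
      have hraw : HasDerivAt F
          ((2 : ℕ) * deriv f u ^ (2 - 1) * deriv (deriv f) u +
            ∑ k ∈ Finset.range (K + 1),
              V k y * (((k + 1 : ℕ)) * (f u ^ 2) ^ (k + 1 - 1) *
                ((2 : ℕ) * f u ^ (2 - 1) * deriv f u)) / ((k : ℝ) + 1)) u := by
        apply HasDerivAt.add
        · exact (Hf' u).pow 2
        · apply HasDerivAt.fun_sum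
          intro k hk
          exact ((((Hf u).pow 2).pow (k + 1)).sub_const _).const_mul _ |>.div_const _
      convert hraw using 1
      rw [hODE u h0u]
      have e1 : (2 : ℕ) * deriv f u ^ (2 - 1) *
            (-(∑ k ∈ Finset.range (K + 1), V k u * f u ^ (2 * k)) * f u)
          = ∑ k ∈ Finset.range (K + 1), (-(V k u) * (2 * f u * deriv f u * (f u ^ 2) ^ k)) := by
        rw [neg_mul, mul_neg, Finset.sum_mul, Finset.mul_sum, ← Finset.sum_neg_distrib]
        refine Finset.sum_congr rfl fun k _ => ?_
        rw [pow_mul]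
        push_cast
        ring
      have e2 : ∀ k ∈ Finset.range (K + 1),
          V k y * (((k + 1 : ℕ)) * (f u ^ 2) ^ (k + 1 - 1) *
            ((2 : ℕ) * f u ^ (2 - 1) * deriv f u)) / ((k : ℝ) + 1)
          = V k y * (2 * f u * deriv f u * (f u ^ 2) ^ k) := by
        intro k hk
        have hk1 : ((k : ℝ) + 1) ≠ 0 := by positivity
        field_simp
        push_cast
        ring
      rw [e1, Finset.sum_congr rfl e2, ← Finset.sum_add_distrib]
      refine Finset.sum_congr rfl fun k _ => ?_
      ring
    -- bound on F'
    have hbound : ∀ u ∈ Icc y z, ‖F' u‖ ≤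
        Cb * (∑ k ∈ Finset.range (K + 1), (V k z - V k y)) := by
      intro u hu
      have h0u : 0 ≤ u := hy0.trans hu.1
      have hu0t : u ∈ Icc (0:ℝ) t := hsub hu
      rw [Real.norm_eq_abs]
      refine (Finset.abs_sum_le_sum_abs _ _).trans ?_
      rw [hCbdef, Finset.mul_sum]
      refine Finset.sum_le_sum fun k hk => ?_
      have hkK : k ≤ K := Nat.lt_succ_iff.mp (Finset.mem_range.mp hk)
      have hmono1 : V k y ≤ V k u := hVmono k hkK hy0 h0u hu.1
      have hmono2 : V k u ≤ V k z := hVmono k hkK h0u (hy0.trans hyz) hu.2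
      have habs : |(V k y - V k u) * (2 * f u * deriv f u * (f u ^ 2) ^ k)|
          = (V k u - V k y) * |2 * f u * deriv f u * (f u ^ 2) ^ k| := by
        rw [abs_mul, abs_sub_comm, abs_of_nonneg (by linarith)]
      rw [habs]
      have habs2 : |2 * f u * deriv f u * (f u ^ 2) ^ k|
          = 2 * |deriv f u * f u| * (f u ^ 2) ^ k := by
        rw [abs_mul, abs_mul, abs_mul, abs_two,
          abs_of_nonneg (pow_nonneg (sq_nonneg (f u)) k), abs_mul]
        ring
      rw [habs2]
      have h1 : 2 * |deriv f u * f u| * (f u ^ 2) ^ k ≤ 2 * B * (1 + A ^ 2) ^ K := by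
        have := hB u hu0t
        have := hpowb u hu0t k hkK
        have := abs_nonneg (deriv f u * f u)
        have := pow_nonneg (sq_nonneg (f u)) k
        nlinarith
      have h2 : 0 ≤ 2 * |deriv f u * f u| * (f u ^ 2) ^ k := by positivity
      calc (V k u - V k y) * (2 * |deriv f u * f u| * (f u ^ 2) ^ k)
          ≤ (V k z - V k y) * (2 * B * (1 + A ^ 2) ^ K) :=
            mul_le_mul (by linarith) h1 h2 (by linarith)
        _ = 2 * B * (1 + A ^ 2) ^ K * (V k z - V k y) := by ring
    -- apply mean value inequality
    have hFdw : ∀ u ∈ Icc y z, HasDerivWithinAt F (F' u) (Icc y z) u :=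
      fun u hu => (hFderiv u hu).hasDerivWithinAt
    have hmvt := Convex.norm_image_sub_le_of_norm_hasDerivWithin_le hFdw hbound
      (convex_Icc y z) (Set.left_mem_Icc.mpr hyz) (Set.right_mem_Icc.mpr hyz)
    have hFz : F z - F y ≤ Cb * (∑ k ∈ Finset.range (K + 1), (V k z - V k y)) * (z - y) := by
      have h1 : F z - F y ≤ |F z - F y| := le_abs_self _
      have h2 : ‖F z - F y‖ = |F z - F y| := rfl
      have h3 : ‖z - y‖ = z - y := by rw [Real.norm_eq_abs, abs_of_nonneg (by linarith)]
      rw [h2, h3] at hmvt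
      linarith
    -- decomposition of G z - G y
    have hdec : G z - G y = (F z - F y) + ∑ k ∈ Finset.range (K + 1),
        (V k z - V k y) * ((f z ^ 2) ^ (k + 1) - (A ^ 2) ^ (k + 1)) / ((k : ℝ) + 1) := by
      have hsum : ∑ k ∈ Finset.range (K + 1),
            V k z * ((f z ^ 2) ^ (k + 1) - (A ^ 2) ^ (k + 1)) / ((k : ℝ) + 1)
          = (∑ k ∈ Finset.range (K + 1),
              V k y * ((f z ^ 2) ^ (k + 1) - (A ^ 2) ^ (k + 1)) / ((k : ℝ) + 1))
            + ∑ k ∈ Finset.range (K + 1),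
              (V k z - V k y) * ((f z ^ 2) ^ (k + 1) - (A ^ 2) ^ (k + 1)) / ((k : ℝ) + 1) := by
        rw [← Finset.sum_add_distrib]
        exact Finset.sum_congr rfl fun k _ => by ring
      simp only [hGdef, hFdef]
      rw [hsum]
      ring
    have hneg : ∑ k ∈ Finset.range (K + 1),
        (V k z - V k y) * ((f z ^ 2) ^ (k + 1) - (A ^ 2) ^ (k + 1)) / ((k : ℝ) + 1) ≤ 0 := by
      apply Finset.sum_nonpos
      intro k hk
      have hkK : k ≤ K := Nat.lt_succ_iff.mp (Finset.mem_range.mp hk)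
      have h1 : 0 ≤ V k z - V k y :=
        sub_nonneg.mpr (hVmono k hkK hy0 (hy0.trans hyz) hyz)
      have h2 : (f z ^ 2) ^ (k + 1) - (A ^ 2) ^ (k + 1) ≤ 0 := by
        have := hfsq_le z ⟨hy0.trans hyz, hzt⟩
        have := pow_le_pow_left₀ (sq_nonneg (f z)) this (k + 1)
        linarith
      apply div_nonpos_of_nonpos_of_nonneg (mul_nonpos_of_nonneg_of_nonpos h1 h2)
      positivity
    calc G z - G y = (F z - F y) + ∑ k ∈ Finset.range (K + 1),
          (V k z - V k y) * ((f z ^ 2) ^ (k + 1) - (A ^ 2) ^ (k + 1)) / ((k : ℝ) + 1) := hdec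
      _ ≤ Cb * (∑ k ∈ Finset.range (K + 1), (V k z - V k y)) * (z - y) + 0 :=
          add_le_add hFz hneg
      _ = Cb * (∑ k ∈ Finset.range (K + 1), (V k z - V k y)) * (z - y) := add_zero _
  -- G is nonincreasing from 0 to t : uniform partition argument
  have hφmono : (∑ k ∈ Finset.range (K + 1), V k 0) ≤ ∑ k ∈ Finset.range (K + 1), V k t :=
    Finset.sum_le_sum fun k hk =>
      hVmono k (Nat.lt_succ_iff.mp (Finset.mem_range.mp hk)) (Set.mem_Ici.mpr le_rfl) ht0 ht0
  have hGt : G t ≤ G 0 := by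
    apply stmt8_aux_partition G (fun u => ∑ k ∈ Finset.range (K + 1), V k u) Cb t ht0 hCb0
      hφmono
    intro y z hy0 hyz hzt
    calc G z - G y ≤ Cb * (∑ k ∈ Finset.range (K + 1), (V k z - V k y)) * (z - y) :=
          twopoint y z hy0 hyz hzt
      _ = Cb * ((∑ k ∈ Finset.range (K + 1), V k z) - ∑ k ∈ Finset.range (K + 1), V k y)
            * (z - y) := by rw [Finset.sum_sub_distrib]
  -- compute G 0 and G t
  have hG0 : G 0 = 0 := by
    simp only [hGdef, hf'0, hAdef, sub_self, mul_zero, zero_div, Finset.sum_const_zero]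
    ring
  have hGtval : G t = (deriv f t) ^ 2 := by
    simp only [hGdef, hft2, sub_self, mul_zero, zero_div, Finset.sum_const_zero]
    ring
  have hdft : deriv f t = 0 := by
    have h1 : (deriv f t) ^ 2 ≤ 0 := by rw [← hGtval]; linarith [hGt, hG0]
    nlinarith [sq_nonneg (deriv f t)]
  -- endgame: contradiction near t
  have hcases : f t = A ∨ f t = -A := by
    have h : (f t - A) * (f t + A) = 0 := by nlinarith [hft2]
    rcases mul_eq_zero.mp h with h | h
    · left; linarith
    · right; linarith
  -- find a point of D close to t
  have hclose : ∀ δ : ℝ, 0 < δ → ∃ s, s ∈ D ∧ t ≤ s ∧ s ≤ t + δ := by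
    intro δ hδ
    obtain ⟨s, hsD, hs⟩ := Real.lt_sInf_add_pos hDne hδ
    exact ⟨s, hsD, csInf_le hDbdd hsD, hs.le⟩
  rcases hcases with hftA | hftA
  · -- f t = A > 0 : f is positive near t, concave, so f ≤ A just after t
    obtain ⟨δ, hδ, hball⟩ := Metric.continuousAt_iff.mp hfc.continuousAt A hA
    have hIpos : ∀ u ∈ Set.Icc t (t + δ / 2), 0 < f u := by
      intro u hu
      have hd : dist u t < δ := by
        rw [Real.dist_eq, abs_of_nonneg (by linarith [hu.1])]
        linarith [hu.2]
      have h1 := hball hd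
      rw [Real.dist_eq, hftA] at h1
      have h2 := abs_lt.mp h1
      linarith [h2.1]
    have hconc : ∀ u ∈ Set.Ioo t (t + δ / 2), deriv (deriv f) u ≤ 0 := by
      intro u hu
      have h0u : 0 ≤ u := le_trans ht0 hu.1.le
      rw [hODE u h0u, neg_mul]
      have hS : 0 ≤ ∑ k ∈ Finset.range (K + 1), V k u * f u ^ (2 * k) :=
        Finset.sum_nonneg fun k hk =>
          mul_nonneg (hVnonneg k (Nat.lt_succ_iff.mp (Finset.mem_range.mp hk)) u h0u)
            (by rw [pow_mul]; positivity)
      have hfu : 0 < f u := hIpos u ⟨hu.1.le, hu.2.le⟩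
      have : 0 ≤ (∑ k ∈ Finset.range (K + 1), V k u * f u ^ (2 * k)) * f u :=
        mul_nonneg hS hfu.le
      linarith
    have hanti' : AntitoneOn (deriv f) (Set.Icc t (t + δ / 2)) :=
      antitoneOn_of_deriv_nonpos (convex_Icc _ _) hf'c.continuousOn
        hf'd.differentiableOn (by rw [interior_Icc]; exact hconc)
    have htmem : t ∈ Set.Icc t (t + δ / 2) := Set.left_mem_Icc.mpr (by linarith)
    have hf'le : ∀ u ∈ Set.Icc t (t + δ / 2), deriv f u ≤ 0 := by
      intro u hu
      have := hanti' htmem hu hu.1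
      rwa [hdft] at this
    have hanti : AntitoneOn f (Set.Icc t (t + δ / 2)) :=
      antitoneOn_of_deriv_nonpos (convex_Icc _ _) hfc.continuousOn
        hfd.differentiableOn
        (by rw [interior_Icc]; exact fun u hu => hf'le u ⟨hu.1.le, hu.2.le⟩)
    obtain ⟨s, hsD, hts, hst⟩ := hclose (δ / 2) (by linarith)
    obtain ⟨hs0, hs2⟩ := hsD
    have hsI : s ∈ Set.Icc t (t + δ / 2) := ⟨hts, hst⟩
    have h1 : f s ≤ A := by
      have := hanti htmem hsI hts
      rwa [hftA] at this
    have h2 : 0 < f s := hIpos s hsI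
    nlinarith
  · -- f t = -A < 0 : f is negative near t, convex, so f ≥ -A just after t
    obtain ⟨δ, hδ, hball⟩ := Metric.continuousAt_iff.mp hfc.continuousAt A hA
    have hIneg : ∀ u ∈ Set.Icc t (t + δ / 2), f u < 0 := by
      intro u hu
      have hd : dist u t < δ := by
        rw [Real.dist_eq, abs_of_nonneg (by linarith [hu.1])]
        linarith [hu.2]
      have h1 := hball hd
      rw [Real.dist_eq, hftA] at h1
      have h2 := abs_lt.mp h1
      linarith [h2.2]
    have hconv : ∀ u ∈ Set.Ioo t (t + δ / 2), 0 ≤ deriv (deriv f) u := by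
      intro u hu
      have h0u : 0 ≤ u := le_trans ht0 hu.1.le
      rw [hODE u h0u, neg_mul]
      have hS : 0 ≤ ∑ k ∈ Finset.range (K + 1), V k u * f u ^ (2 * k) :=
        Finset.sum_nonneg fun k hk =>
          mul_nonneg (hVnonneg k (Nat.lt_succ_iff.mp (Finset.mem_range.mp hk)) u h0u)
            (by rw [pow_mul]; positivity)
      have hfu : f u < 0 := hIneg u ⟨hu.1.le, hu.2.le⟩
      have : (∑ k ∈ Finset.range (K + 1), V k u * f u ^ (2 * k)) * f u ≤ 0 :=
        mul_nonpos_of_nonneg_of_nonpos hS hfu.le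
      linarith
    have hmono' : MonotoneOn (deriv f) (Set.Icc t (t + δ / 2)) :=
      monotoneOn_of_deriv_nonneg (convex_Icc _ _) hf'c.continuousOn
        hf'd.differentiableOn (by rw [interior_Icc]; exact hconv)
    have htmem : t ∈ Set.Icc t (t + δ / 2) := Set.left_mem_Icc.mpr (by linarith)
    have hf'ge : ∀ u ∈ Set.Icc t (t + δ / 2), 0 ≤ deriv f u := by
      intro u hu
      have := hmono' htmem hu hu.1
      rwa [hdft] at this
    have hmono : MonotoneOn f (Set.Icc t (t + δ / 2)) :=
      monotoneOn_of_deriv_nonneg (convex_Icc _ _) hfc.continuousOn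
        hfd.differentiableOn
        (by rw [interior_Icc]; exact fun u hu => hf'ge u ⟨hu.1.le, hu.2.le⟩)
    obtain ⟨s, hsD, hts, hst⟩ := hclose (δ / 2) (by linarith)
    obtain ⟨hs0, hs2⟩ := hsD
    have hsI : s ∈ Set.Icc t (t + δ / 2) := ⟨hts, hst⟩
    have h1 : -A ≤ f s := by
      have := hmono htmem hsI hts
      rwa [hftA] at this
    have h2 : f s < 0 := hIneg s hsI
    nlinarith
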